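/- Let 𝒜 be an N×N complex matrix such that Im 𝒜 ≥ 0 and for every real diagonal matrix D(α) the matrix 𝒜 + D(α) has no real eigenvalues. Then for all ζ₁,...,ζ_N in the open upper half-plane, the matrix 𝒜 + D(ζ) is invertible and all its eigenvalues lie in the open upper half-plane. -/

import Mathlib

open Matrix
open scoped ComplexOrder

/-- Let `𝒜` satisfy `Im 𝒜 ≥ 0` and suppose `𝒜 + D(α)` has no real eigenvalue for every real
diagonal `D(α)`.  Then for `ζ_j` in the open upper half-plane, `𝒜 + D(ζ)` is invertible and
all its eigenvalues lie in the open upper half-plane. -/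
theorem shifted_matrix_eigenvalues_upper
    (N : ℕ) (A : Matrix (Fin N) (Fin N) ℂ)
    (hIm : ((2 * Complex.I)⁻¹ • (A - Aᴴ)).PosSemidef)
    (hreal : ∀ (α : Fin N → ℝ) (μ : ℝ) (f : Fin N → ℂ), f ≠ 0 →
      (A + Matrix.diagonal (fun j => (α j : ℂ))) *ᵥ f = (μ : ℂ) • f → False) :
    ∀ ζ : Fin N → ℂ, (∀ j, 0 < (ζ j).im) →
      IsUnit (A + Matrix.diagonal ζ) ∧
      ∀ (μ : ℂ) (f : Fin N → ℂ), f ≠ 0 → (A + Matrix.diagonal ζ) *ᵥ f = μ • f → 0 < μ.im := by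
  intro ζ hζ
  have key : ∀ (μ : ℂ) (f : Fin N → ℂ), f ≠ 0 →
      (A + Matrix.diagonal ζ) *ᵥ f = μ • f → 0 < μ.im := by
    intro μ f hf heq
    by_contra hμ
    push_neg at hμ
    set z : ℂ := dotProduct (star f) (A *ᵥ f) with hzdef
    have hconj : dotProduct (star f) (Aᴴ *ᵥ f) = starRingEnd ℂ z := by
      simp only [hzdef, dotProduct, mulVec, dotProduct, conjTranspose_apply, map_sum,
        Pi.star_apply, _root_.map_mul, Finset.mul_sum]
      rw [Finset.sum_comm]
      apply Finset.sum_congr rfl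
      intro i _
      apply Finset.sum_congr rfl
      intro j _
      simp [RCLike.star_def]
      ring
    have hw := hIm.dotProduct_mulVec_nonneg f
    have hw' : dotProduct (star f) ((((2 * Complex.I)⁻¹ • (A - Aᴴ)) *ᵥ f))
        = (z.im : ℂ) := by
      rw [smul_mulVec, dotProduct_smul, sub_mulVec, dotProduct_sub, hconj,
        smul_eq_mul, Complex.im_eq_sub_conj]
      field_simp
      rfl
    rw [hw'] at hw
    have hzim : 0 ≤ z.im := Complex.zero_le_real.mp hw
    -- main equation
    have h1 : dotProduct (star f) ((A + Matrix.diagonal ζ) *ᵥ f)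
        = μ * dotProduct (star f) f := by
      rw [heq, dotProduct_smul, smul_eq_mul]
    have hSf : dotProduct (star f) f = ∑ j, (Complex.normSq (f j) : ℂ) := by
      simp only [dotProduct, Pi.star_apply, RCLike.star_def,
        ← Complex.normSq_eq_conj_mul_self]
    rw [hSf] at h1
    have h2 : z + ∑ j, ζ j * (Complex.normSq (f j) : ℂ)
        = μ * ∑ j, (Complex.normSq (f j) : ℂ) := by
      rw [← h1, add_mulVec, dotProduct_add, hzdef]
      congr 1
      · simp only [dotProduct, mulVec_diagonal, Pi.star_apply, RCLike.star_def]
        apply Finset.sum_congr rfl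
        intro j _
        rw [show ((Complex.normSq (f j)) : ℂ) = (starRingEnd ℂ) (f j) * f j from
          Complex.normSq_eq_conj_mul_self]
        ring
    have h3 : z.im + ∑ j, (ζ j).im * Complex.normSq (f j)
        = μ.im * ∑ j, Complex.normSq (f j) := by
      have := congrArg Complex.im h2
      simpa [Complex.add_im, Complex.mul_im, Complex.im_sum, Complex.mul_im] using this
    have hS : 0 ≤ ∑ j, Complex.normSq (f j) :=
      Finset.sum_nonneg fun j _ => Complex.normSq_nonneg _
    have hterm : ∀ j ∈ Finset.univ, 0 ≤ (ζ j).im * Complex.normSq (f j) :=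
      fun j _ => mul_nonneg (le_of_lt (hζ j)) (Complex.normSq_nonneg _)
    have hsum0 : ∑ j, (ζ j).im * Complex.normSq (f j) = 0 := by
      have hle : ∑ j, (ζ j).im * Complex.normSq (f j) ≤ 0 := by
        nlinarith [Finset.sum_nonneg hterm]
      exact le_antisymm hle (Finset.sum_nonneg hterm)
    have hfz : f = 0 := by
      funext j
      have := (Finset.sum_eq_zero_iff_of_nonneg hterm).mp hsum0 j (Finset.mem_univ j)
      have hnsq : Complex.normSq (f j) = 0 := by
        rcases mul_eq_zero.mp this with h | h
        · exact absurd h (ne_of_gt (hζ j))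
        · exact h
      exact Complex.normSq_eq_zero.mp hnsq
    exact hf hfz
  refine ⟨?_, key⟩
  by_contra hunit
  rw [Matrix.isUnit_iff_isUnit_det] at hunit
  have hdet : (A + Matrix.diagonal ζ).det = 0 := by
    simpa [isUnit_iff_ne_zero, not_not] using hunit
  obtain ⟨v, hv0, hv⟩ := (Matrix.exists_mulVec_eq_zero_iff).mpr hdet
  have := key 0 v hv0 (by simpa using hv)
  simp at this
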